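/- A file (row or column) belongs to some minimum-size cover of a set Z of sites if and only if it intersects every maximum-size independent subset of Z. -/

import Mathlib

open Finset

variable {m n : ℕ}

/-- A set of sites is independent (an assignment) if no two of its sites share
a row or a column. -/
def Indep (π : Finset (Fin m × Fin n)) : Prop :=
  ∀ p ∈ π, ∀ q ∈ π, p ≠ q → p.1 ≠ q.1 ∧ p.2 ≠ q.2

/-- The cost of a set of sites in the matrix `M`. -/
def cost (M : Fin m → Fin n → ℝ) (π : Finset (Fin m × Fin n)) : ℝ :=
  ∑ p ∈ π, M p.1 p.2

/-- `π` is an optimal `k`-assignment in `M`. -/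
def IsOptAssign (M : Fin m → Fin n → ℝ) (k : ℕ) (π : Finset (Fin m × Fin n)) : Prop :=
  Indep π ∧ π.card = k ∧
    ∀ σ : Finset (Fin m × Fin n), Indep σ → σ.card = k → cost M π ≤ cost M σ

/-- The set of files consisting of the rows `X` and the columns `Y` covers `Z`. -/
def Covers (X : Finset (Fin m)) (Y : Finset (Fin n)) (Z : Finset (Fin m × Fin n)) : Prop :=
  ∀ p ∈ Z, p.1 ∈ X ∨ p.2 ∈ Y

/-- `(X, Y)` is a minimum-size cover of `Z`. -/
def IsOptCover (Z : Finset (Fin m × Fin n)) (X : Finset (Fin m)) (Y : Finset (Fin n)) : Prop :=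
  Covers X Y Z ∧ ∀ (X' : Finset (Fin m)) (Y' : Finset (Fin n)),
    Covers X' Y' Z → X.card + Y.card ≤ X'.card + Y'.card

section Aux

open scoped Classical

lemma phi_injOn (X : Finset (Fin m)) {μ : Finset (Fin m × Fin n)} (hμ : Indep μ) :
    Set.InjOn (fun p : Fin m × Fin n =>
      if p.1 ∈ X then (Sum.inl p.1 : Fin m ⊕ Fin n) else Sum.inr p.2) μ := by
  intro p hp q hq h
  by_contra hne
  obtain ⟨h1, h2⟩ := hμ p hp q hq hne
  simp only at h
  split_ifs at h with hp1 hq1 <;> simp_all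

lemma phi_image {Z : Finset (Fin m × Fin n)} {X : Finset (Fin m)} {Y : Finset (Fin n)}
    (hC : Covers X Y Z) {μ : Finset (Fin m × Fin n)} (hμZ : μ ⊆ Z) :
    μ.image (fun p : Fin m × Fin n =>
        if p.1 ∈ X then (Sum.inl p.1 : Fin m ⊕ Fin n) else Sum.inr p.2) ⊆
      X.map ⟨Sum.inl, Sum.inl_injective⟩ ∪ Y.map ⟨Sum.inr, Sum.inr_injective⟩ := by
  intro x hx
  obtain ⟨p, hp, rfl⟩ := mem_image.mp hx
  by_cases hpX : p.1 ∈ X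
  · simp [hpX]
  · rcases hC p (hμZ hp) with h | h
    · exact absurd h hpX
    · simp [hpX, h]

lemma weak_duality (Z : Finset (Fin m × Fin n)) (X : Finset (Fin m)) (Y : Finset (Fin n))
    (hC : Covers X Y Z) (μ : Finset (Fin m × Fin n)) (hμZ : μ ⊆ Z) (hμ : Indep μ) :
    μ.card ≤ X.card + Y.card := by
  calc μ.card
      = (μ.image (fun p : Fin m × Fin n =>
          if p.1 ∈ X then (Sum.inl p.1 : Fin m ⊕ Fin n) else Sum.inr p.2)).card :=
        (card_image_of_injOn (phi_injOn X hμ)).symm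
    _ ≤ (X.map ⟨Sum.inl, Sum.inl_injective⟩ ∪ Y.map ⟨Sum.inr, Sum.inr_injective⟩).card :=
        card_le_card (phi_image hC hμZ)
    _ ≤ X.card + Y.card := (card_union_le _ _).trans (by simp)

lemma konig (Z : Finset (Fin m × Fin n)) :
    ∃ (X : Finset (Fin m)) (Y : Finset (Fin n)) (μ : Finset (Fin m × Fin n)),
      Covers X Y Z ∧ μ ⊆ Z ∧ Indep μ ∧ X.card + Y.card = μ.card := by
  set N : Finset (Fin m) → Finset (Fin n) :=
    fun S => (Z.filter fun p => p.1 ∈ S).image Prod.snd with hN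
  obtain ⟨S₀, -, hS₀⟩ := Finset.exists_max_image (univ : Finset (Finset (Fin m)))
    (fun S => S.card - (N S).card) ⟨∅, mem_univ ∅⟩
  set d := S₀.card - (N S₀).card with hd
  have hle : ∀ S : Finset (Fin m), S.card ≤ (N S).card + d := by
    intro S
    have := hS₀ S (mem_univ S)
    omega
  obtain ⟨S, hSeq⟩ : ∃ S : Finset (Fin m), (N S).card + d = S.card := by
    rcases Nat.eq_zero_or_pos d with h | h
    · refine ⟨∅, ?_⟩
      have : N ∅ = ∅ := by
        rw [hN]
        simp
      simp [this, h]
    · exact ⟨S₀, by omega⟩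
  set t : Fin m → Finset (Fin n ⊕ Fin d) := fun a =>
    ((Z.filter fun p => p.1 = a).image Prod.snd).map ⟨Sum.inl, Sum.inl_injective⟩ ∪
      (univ : Finset (Fin d)).map ⟨Sum.inr, Sum.inr_injective⟩ with ht
  have hall : ∀ s : Finset (Fin m), s.card ≤ (s.biUnion t).card := by
    intro s
    rcases s.eq_empty_or_nonempty with rfl | ⟨a, ha⟩
    · simp
    have hsub : (N s).map ⟨Sum.inl, Sum.inl_injective⟩ ∪
        (univ : Finset (Fin d)).map ⟨Sum.inr, Sum.inr_injective⟩ ⊆ s.biUnion t := by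
      intro x hx
      rcases mem_union.mp hx with hx | hx
      · obtain ⟨j, hj, rfl⟩ := mem_map.mp hx
        obtain ⟨p, hp, rfl⟩ := mem_image.mp hj
        rw [mem_filter] at hp
        refine mem_biUnion.mpr ⟨p.1, hp.2, mem_union_left _ ?_⟩
        exact mem_map.mpr ⟨p.2, mem_image.mpr ⟨p, mem_filter.mpr ⟨hp.1, rfl⟩, rfl⟩, rfl⟩
      · exact mem_biUnion.mpr ⟨a, ha, mem_union_right _ hx⟩
    have hdisj : Disjoint ((N s).map (⟨Sum.inl, Sum.inl_injective⟩ :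
        Fin n ↪ Fin n ⊕ Fin d)) ((univ : Finset (Fin d)).map ⟨Sum.inr, Sum.inr_injective⟩) := by
      rw [Finset.disjoint_left]
      rintro x hx hx'
      obtain ⟨j, -, rfl⟩ := mem_map.mp hx
      obtain ⟨k, -, hk⟩ := mem_map.mp hx'
      exact Sum.inr_ne_inl hk
    have hcard : ((N s).map (⟨Sum.inl, Sum.inl_injective⟩ : Fin n ↪ Fin n ⊕ Fin d) ∪
        (univ : Finset (Fin d)).map ⟨Sum.inr, Sum.inr_injective⟩).card = (N s).card + d := by
      rw [card_union_of_disjoint hdisj, card_map, card_map, card_univ, Fintype.card_fin]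
    calc s.card ≤ (N s).card + d := hle s
      _ = _ := hcard.symm
      _ ≤ (s.biUnion t).card := card_le_card hsub
  obtain ⟨f, hfinj, hft⟩ := (Finset.all_card_le_biUnion_card_iff_exists_injective t).mp hall
  set μ : Finset (Fin m × Fin n) := Z.filter (fun p => f p.1 = Sum.inl p.2) with hμdef
  have hμZ : μ ⊆ Z := filter_subset _ _
  have hμI : Indep μ := by
    intro p hp q hq hne
    rw [hμdef, mem_filter] at hp hq
    constructor
    · intro h
      apply hne
      have : (Sum.inl p.2 : Fin n ⊕ Fin d) = Sum.inl q.2 := by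
        rw [← hp.2, ← hq.2, h]
      exact Prod.ext h (Sum.inl.inj this)
    · intro h
      apply hne
      have : f p.1 = f q.1 := by
        rw [hp.2, hq.2, h]
      exact Prod.ext (hfinj this) h
  -- rows whose image under f is a dummy column
  set B : Finset (Fin m) := (univ : Finset (Fin m)).filter (fun a => (f a).isRight) with hB
  have hBcard : B.card ≤ d := by
    have himg : B.image f ⊆ (univ : Finset (Fin d)).map ⟨Sum.inr, Sum.inr_injective⟩ := by
      intro x hx
      obtain ⟨a, ha, rfl⟩ := mem_image.mp hx
      rw [hB, mem_filter] at ha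
      obtain ⟨k, hk⟩ := Sum.isRight_iff.mp ha.2
      rw [hk]
      exact mem_map.mpr ⟨k, mem_univ k, rfl⟩
    calc B.card = (B.image f).card := (card_image_of_injective B hfinj).symm
      _ ≤ _ := card_le_card himg
      _ = d := by rw [card_map, card_univ, Fintype.card_fin]
  have hcompl : Bᶜ ⊆ μ.image Prod.fst := by
    intro a ha
    rw [mem_compl] at ha
    rcases hfa : f a with j | k
    case inr =>
      refine absurd ?_ ha
      rw [hB, mem_filter]
      exact ⟨mem_univ a, by simp [hfa]⟩
    have hmem : (Sum.inl j : Fin n ⊕ Fin d) ∈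
        ((Z.filter fun p => p.1 = a).image Prod.snd).map ⟨Sum.inl, Sum.inl_injective⟩ ∪
          (univ : Finset (Fin d)).map ⟨Sum.inr, Sum.inr_injective⟩ := by
      rw [← hfa]; exact hft a
    rcases mem_union.mp hmem with h | h
    · obtain ⟨j', hj', hjj⟩ := mem_map.mp h
      obtain ⟨p, hp, rfl⟩ := mem_image.mp hj'
      rw [mem_filter] at hp
      have hpj : p = (a, j) := by
        have : (Sum.inl p.2 : Fin n ⊕ Fin d) = Sum.inl j := hjj
        exact Prod.ext hp.2 (Sum.inl.inj this)
      refine mem_image.mpr ⟨(a, j), ?_, rfl⟩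
      rw [hμdef, mem_filter]
      exact ⟨hpj ▸ hp.1, by rw [hfa]⟩
    · obtain ⟨k, -, hk⟩ := mem_map.mp h
      exact absurd hk Sum.inr_ne_inl
  have hμcard : m - d ≤ μ.card := by
    have h1 : Bᶜ.card ≤ (μ.image Prod.fst).card := card_le_card hcompl
    have h2 : (μ.image Prod.fst).card ≤ μ.card := card_image_le
    have h3 : Bᶜ.card = m - B.card := by
      rw [card_compl, Fintype.card_fin]
    omega
  refine ⟨Sᶜ, N S, μ, ?_, hμZ, hμI, ?_⟩
  · intro p hp
    by_cases h : p.1 ∈ S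
    · exact Or.inr (mem_image.mpr ⟨p, mem_filter.mpr ⟨hp, h⟩, rfl⟩)
    · exact Or.inl (mem_compl.mpr h)
  · have hSm : S.card ≤ m := by
      have := card_le_card (subset_univ S)
      rwa [card_univ, Fintype.card_fin] at this
    have hcompl' : Sᶜ.card = m - S.card := by
      rw [card_compl, Fintype.card_fin]
    have hwd : μ.card ≤ Sᶜ.card + (N S).card :=
      weak_duality Z Sᶜ (N S) (by
        intro p hp
        by_cases h : p.1 ∈ S
        · exact Or.inr (mem_image.mpr ⟨p, mem_filter.mpr ⟨hp, h⟩, rfl⟩)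
        · exact Or.inl (mem_compl.mpr h)) μ hμZ hμI
    omega

lemma exists_max_indep (Z : Finset (Fin m × Fin n)) :
    ∃ μ, μ ⊆ Z ∧ Indep μ ∧ ∀ μ', μ' ⊆ Z → Indep μ' → μ'.card ≤ μ.card := by
  obtain ⟨μ, hμ, hmax⟩ := Finset.exists_max_image (Z.powerset.filter fun π => Indep π) card
    ⟨∅, by simp [Indep]⟩
  rw [mem_filter, mem_powerset] at hμ
  exact ⟨μ, hμ.1, hμ.2, fun μ' h1 h2 =>
    hmax μ' (by rw [mem_filter, mem_powerset]; exact ⟨h1, h2⟩)⟩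

lemma row_case (Z : Finset (Fin m × Fin n)) (i : Fin m) :
    (∃ (X : Finset (Fin m)) (Y : Finset (Fin n)), IsOptCover Z X Y ∧ i ∈ X) ↔
    (∀ μ : Finset (Fin m × Fin n), μ ⊆ Z → Indep μ →
      (∀ μ' : Finset (Fin m × Fin n), μ' ⊆ Z → Indep μ' → μ'.card ≤ μ.card) →
      ∃ p ∈ μ, p.1 = i) := by
  constructor
  · rintro ⟨X, Y, ⟨hcov, hmin⟩, hiX⟩ μ hμZ hμI hμmax
    obtain ⟨X₀, Y₀, μ₀, hc₀, hs₀, hi₀, he₀⟩ := konig Z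
    have h1 : μ.card ≤ X.card + Y.card := weak_duality Z X Y hcov μ hμZ hμI
    have h2 : X.card + Y.card ≤ X₀.card + Y₀.card := hmin _ _ hc₀
    have h3 : μ₀.card ≤ μ.card := hμmax μ₀ hs₀ hi₀
    have hcard : X.card + Y.card = μ.card := by omega
    set φ : Fin m × Fin n → Fin m ⊕ Fin n :=
      fun p => if p.1 ∈ X then Sum.inl p.1 else Sum.inr p.2 with hφ
    set T := X.map ⟨Sum.inl, Sum.inl_injective⟩ ∪ Y.map ⟨Sum.inr, Sum.inr_injective⟩ with hT
    have hTcard : T.card ≤ X.card + Y.card := (card_union_le _ _).trans (by simp)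
    have heq : μ.image φ = T := by
      refine eq_of_subset_of_card_le (phi_image hcov hμZ) ?_
      rw [card_image_of_injOn (phi_injOn X hμI)]
      omega
    have hiT : (Sum.inl i : Fin m ⊕ Fin n) ∈ T :=
      mem_union_left _ (mem_map.mpr ⟨i, hiX, rfl⟩)
    rw [← heq] at hiT
    obtain ⟨p, hp, hpe⟩ := mem_image.mp hiT
    refine ⟨p, hp, ?_⟩
    by_cases h : p.1 ∈ X
    · simpa [hφ, h] using hpe
    · simp [hφ, h] at hpe
  · intro H
    obtain ⟨μs, hs1, hs2, hs3⟩ := exists_max_indep Z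
    obtain ⟨X', Y', μ₀, hc', hs', hi', he'⟩ := konig (Z.filter (fun p => p.1 ≠ i))
    have hlt : μ₀.card < μs.card := by
      rcases lt_or_ge μ₀.card μs.card with h | h
      · exact h
      exfalso
      have hsubZ : μ₀ ⊆ Z := hs'.trans (filter_subset _ _)
      obtain ⟨p, hp, hpi⟩ := H μ₀ hsubZ hi'
        (fun μ'' a b => (hs3 μ'' a b).trans h)
      have := hs' hp
      rw [mem_filter] at this
      exact this.2 hpi
    refine ⟨insert i X', Y', ⟨?_, ?_⟩, mem_insert_self i X'⟩
    · intro p hp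
      by_cases h : p.1 = i
      · exact Or.inl (by rw [h]; exact mem_insert_self i X')
      · rcases hc' p (mem_filter.mpr ⟨hp, h⟩) with h' | h'
        · exact Or.inl (mem_insert_of_mem h')
        · exact Or.inr h'
    · intro X'' Y'' hcov''
      have h1 : μs.card ≤ X''.card + Y''.card := weak_duality Z X'' Y'' hcov'' μs hs1 hs2
      have h2 : (insert i X').card ≤ X'.card + 1 := card_insert_le i X'
      omega

lemma col_case (Z : Finset (Fin m × Fin n)) (j : Fin n) :
    (∃ (X : Finset (Fin m)) (Y : Finset (Fin n)), IsOptCover Z X Y ∧ j ∈ Y) ↔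
    (∀ μ : Finset (Fin m × Fin n), μ ⊆ Z → Indep μ →
      (∀ μ' : Finset (Fin m × Fin n), μ' ⊆ Z → Indep μ' → μ'.card ≤ μ.card) →
      ∃ p ∈ μ, p.2 = j) := by
  constructor
  · rintro ⟨X, Y, ⟨hcov, hmin⟩, hjY⟩ μ hμZ hμI hμmax
    obtain ⟨X₀, Y₀, μ₀, hc₀, hs₀, hi₀, he₀⟩ := konig Z
    have h1 : μ.card ≤ X.card + Y.card := weak_duality Z X Y hcov μ hμZ hμI
    have h2 : X.card + Y.card ≤ X₀.card + Y₀.card := hmin _ _ hc₀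
    have h3 : μ₀.card ≤ μ.card := hμmax μ₀ hs₀ hi₀
    have hcard : X.card + Y.card = μ.card := by omega
    set φ : Fin m × Fin n → Fin m ⊕ Fin n :=
      fun p => if p.1 ∈ X then Sum.inl p.1 else Sum.inr p.2 with hφ
    set T := X.map ⟨Sum.inl, Sum.inl_injective⟩ ∪ Y.map ⟨Sum.inr, Sum.inr_injective⟩ with hT
    have hTcard : T.card ≤ X.card + Y.card := (card_union_le _ _).trans (by simp)
    have heq : μ.image φ = T := by
      refine eq_of_subset_of_card_le (phi_image hcov hμZ) ?_
      rw [card_image_of_injOn (phi_injOn X hμI)]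
      omega
    have hjT : (Sum.inr j : Fin m ⊕ Fin n) ∈ T :=
      mem_union_right _ (mem_map.mpr ⟨j, hjY, rfl⟩)
    rw [← heq] at hjT
    obtain ⟨p, hp, hpe⟩ := mem_image.mp hjT
    refine ⟨p, hp, ?_⟩
    by_cases h : p.1 ∈ X
    · simp [hφ, h] at hpe
    · simpa [hφ, h] using hpe
  · intro H
    obtain ⟨μs, hs1, hs2, hs3⟩ := exists_max_indep Z
    obtain ⟨X', Y', μ₀, hc', hs', hi', he'⟩ := konig (Z.filter (fun p => p.2 ≠ j))
    have hlt : μ₀.card < μs.card := by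
      rcases lt_or_ge μ₀.card μs.card with h | h
      · exact h
      exfalso
      have hsubZ : μ₀ ⊆ Z := hs'.trans (filter_subset _ _)
      obtain ⟨p, hp, hpj⟩ := H μ₀ hsubZ hi'
        (fun μ'' a b => (hs3 μ'' a b).trans h)
      have := hs' hp
      rw [mem_filter] at this
      exact this.2 hpj
    refine ⟨X', insert j Y', ⟨?_, ?_⟩, mem_insert_self j Y'⟩
    · intro p hp
      by_cases h : p.2 = j
      · exact Or.inr (by rw [h]; exact mem_insert_self j Y')
      · rcases hc' p (mem_filter.mpr ⟨hp, h⟩) with h' | h'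
        · exact Or.inl h'
        · exact Or.inr (mem_insert_of_mem h')
    · intro X'' Y'' hcov''
      have h1 : μs.card ≤ X''.card + Y''.card := weak_duality Z X'' Y'' hcov'' μs hs1 hs2
      have h2 : (insert j Y').card ≤ Y'.card + 1 := card_insert_le j Y'
      omega

end Aux

/-- a file belongs to some minimum-size cover of `Z` if and only
if it intersects every maximum-size independent subset of `Z`.  Stated for
rows and for columns. -/
theorem file_in_optimal_cover_iff_meets_every_max_independent (Z : Finset (Fin m × Fin n)) :
    (∀ i : Fin m,
      (∃ (X : Finset (Fin m)) (Y : Finset (Fin n)), IsOptCover Z X Y ∧ i ∈ X) ↔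
      (∀ μ : Finset (Fin m × Fin n), μ ⊆ Z → Indep μ →
        (∀ μ' : Finset (Fin m × Fin n), μ' ⊆ Z → Indep μ' → μ'.card ≤ μ.card) →
        ∃ p ∈ μ, p.1 = i)) ∧
    (∀ j : Fin n,
      (∃ (X : Finset (Fin m)) (Y : Finset (Fin n)), IsOptCover Z X Y ∧ j ∈ Y) ↔
      (∀ μ : Finset (Fin m × Fin n), μ ⊆ Z → Indep μ →
        (∀ μ' : Finset (Fin m × Fin n), μ' ⊆ Z → Indep μ' → μ'.card ≤ μ.card) →
        ∃ p ∈ μ, p.2 = j)) := by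
  exact ⟨fun i => row_case Z i, fun j => col_case Z j⟩
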